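/- arXiv:1705.02838 — 4 statements merged into one kernel-verified Lean document; each statement's English description precedes it below -/
import Mathlib

section
/- Let H be a self-adjoint operator on a finite-dimensional Hilbert space with spectral decomposition H = ∑ λ P_λ, and let P be the spectral projection onto a subset Σ¹ of the spectrum such that dist(Σ¹, σ(H)\Σ¹) ≥ γ > 0. If an operator A is block off-diagonal, i.e. A = P A (1-P) + (1-P) A P, and W : ℝ → ℂ is integrable with Fourier transform Ŵ(ξ) = -i/(√(2π) ξ) for |ξ| ≥ γ, then A = -i [H, I(A)] where I(A) = ∫ W(t) e^{itH} A e^{-itH} dt. -/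
set_option maxHeartbeats 1000000
set_option synthInstance.maxHeartbeats 400000

open MeasureTheory Complex

section Aux
variable {V : Type*} [NormedRing V] [NormedAlgebra ℂ V] [CompleteSpace V]

omit [CompleteSpace V] in
lemma pow_sum_proj {k : ℕ} (E : Fin k → V)
    (hEproj : ∀ i, E i * E i = E i)
    (hEorth : ∀ i j, i ≠ j → E i * E j = 0)
    (hEsum : ∑ i, E i = 1) (c : Fin k → ℂ) :
    ∀ m : ℕ, (∑ i, c i • E i) ^ m = ∑ i, (c i ^ m) • E i := by
  intro m
  induction m with
  | zero => simp [hEsum]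
  | succ m ih =>
    rw [pow_succ, ih, Finset.sum_mul_sum]
    refine Finset.sum_congr rfl fun i _ => ?_
    rw [Finset.sum_eq_single i]
    · rw [smul_mul_smul_comm, hEproj i, ← pow_succ]
    · intro j _ hji
      rw [smul_mul_smul_comm, hEorth i j (Ne.symm hji), smul_zero]
    · intro h; exact absurd (Finset.mem_univ i) h

lemma exp_sum_proj {k : ℕ} (E : Fin k → V)
    (hEproj : ∀ i, E i * E i = E i)
    (hEorth : ∀ i j, i ≠ j → E i * E j = 0)
    (hEsum : ∑ i, E i = 1) (c : Fin k → ℂ) :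
    NormedSpace.exp (∑ i, c i • E i) = ∑ i, Complex.exp (c i) • E i := by
  rw [NormedSpace.exp_eq_tsum (𝕂 := ℂ)]
  have h1 : ∀ m : ℕ, ((m.factorial : ℂ))⁻¹ • (∑ i, c i • E i) ^ m
      = ∑ i : Fin k, (((m.factorial : ℂ))⁻¹ • c i ^ m) • E i := by
    intro m
    rw [pow_sum_proj E hEproj hEorth hEsum c m, Finset.smul_sum]
    simp [smul_smul]
  simp_rw [h1]
  rw [Summable.tsum_finsetSum (fun i _ => Summable.smul_const
      (NormedSpace.expSeries_summable' (𝕂 := ℂ) (c i)) (E i))]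
  refine Finset.sum_congr rfl fun i _ => ?_
  rw [Summable.tsum_smul_const (NormedSpace.expSeries_summable' (𝕂 := ℂ) (c i))]
  congr 1
  rw [Complex.exp_eq_exp_ℂ, NormedSpace.exp_eq_tsum (𝕂 := ℂ)]
end Aux

/-- off-diagonal inversion `A = -i [H, I(A)]` for a gapped self-adjoint `H`. -/
theorem offdiagonal_inversion (n k : ℕ)
    (H P A : EuclideanSpace ℂ (Fin n) →L[ℂ] EuclideanSpace ℂ (Fin n))
    (γ : ℝ) (hγ : 0 < γ)
    (lam : Fin k → ℝ)
    (E : Fin k → (EuclideanSpace ℂ (Fin n) →L[ℂ] EuclideanSpace ℂ (Fin n)))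
    (hEproj : ∀ i, E i * E i = E i) (hEsa : ∀ i, star (E i) = E i)
    (hEorth : ∀ i j, i ≠ j → E i * E j = 0)
    (hEsum : ∑ i, E i = 1)
    (hH : H = ∑ i, (lam i : ℂ) • E i)
    (S : Finset (Fin k)) (hP : P = ∑ i ∈ S, E i)
    (hgap : ∀ i ∈ S, ∀ j ∉ S, γ ≤ |lam i - lam j|)
    (W : ℝ → ℂ) (hWint : Integrable W)
    (hW : ∀ ξ : ℝ, γ ≤ |ξ| →
      (1 / (Real.sqrt (2 * Real.pi) : ℂ)) *
          (∫ t : ℝ, Complex.exp (-(Complex.I * ξ * t)) * W t)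
        = -Complex.I / ((Real.sqrt (2 * Real.pi) : ℂ) * ξ))
    (hA : A = P * A * (1 - P) + (1 - P) * A * P) :
    A = -Complex.I •
      (H * (∫ t : ℝ, W t • (NormedSpace.exp ((Complex.I * t) • H) * A *
              NormedSpace.exp (-(Complex.I * t) • H)))
        - (∫ t : ℝ, W t • (NormedSpace.exp ((Complex.I * t) • H) * A *
              NormedSpace.exp (-(Complex.I * t) • H))) * H) := by
  -- exponential formulas
  have hexp1 : ∀ t : ℝ, NormedSpace.exp ((Complex.I * t) • H)
      = ∑ i, Complex.exp (Complex.I * t * lam i) • E i := by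
    intro t
    rw [hH, Finset.smul_sum]
    simp_rw [smul_smul]
    exact exp_sum_proj E hEproj hEorth hEsum _
  have hexp2 : ∀ t : ℝ, NormedSpace.exp (-(Complex.I * t) • H)
      = ∑ i, Complex.exp (-(Complex.I * t) * lam i) • E i := by
    intro t
    rw [hH, Finset.smul_sum]
    simp_rw [smul_smul]
    exact exp_sum_proj E hEproj hEorth hEsum _
  -- conjugation formula
  have hconj : ∀ t : ℝ,
      NormedSpace.exp ((Complex.I * t) • H) * A * NormedSpace.exp (-(Complex.I * t) • H)
        = ∑ i, ∑ j, Complex.exp (Complex.I * t * ((lam i : ℂ) - (lam j : ℂ))) • (E i * A * E j) := by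
    intro t
    rw [hexp1 t, hexp2 t, Finset.sum_mul]
    simp_rw [smul_mul_assoc]
    rw [Finset.sum_mul_sum]
    refine Finset.sum_congr rfl fun i _ => Finset.sum_congr rfl fun j _ => ?_
    rw [smul_mul_smul_comm, ← Complex.exp_add]
    congr 2
    ring
  -- integrability
  have hintg : ∀ r : ℝ, Integrable (fun t : ℝ => W t * Complex.exp (Complex.I * t * r)) := by
    intro r
    have heq : (fun t : ℝ => W t * Complex.exp (Complex.I * t * r))
        = fun t : ℝ => Complex.exp (Complex.I * t * r) * W t := funext fun t => mul_comm _ _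
    rw [heq]
    refine hWint.bdd_mul (c := 1) ?_ (Filter.Eventually.of_forall fun t => ?_)
    · exact (Complex.continuous_exp.comp (by fun_prop)).aestronglyMeasurable
    · have h2 : Complex.I * (t : ℂ) * (r : ℂ) = ((t * r : ℝ) : ℂ) * Complex.I := by
        push_cast; ring
      rw [h2, Complex.norm_exp_ofReal_mul_I]
  have hintg2 : ∀ i j : Fin k,
      Integrable (fun t : ℝ => W t * Complex.exp (Complex.I * t * ((lam i : ℂ) - (lam j : ℂ)))) := by
    intro i j
    have h1 : ((lam i : ℂ) - (lam j : ℂ)) = ((lam i - lam j : ℝ) : ℂ) := by push_cast; ring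
    rw [h1]; exact hintg _
  -- the integral as a double sum
  set c : Fin k → Fin k → ℂ :=
    fun i j => ∫ t : ℝ, W t * Complex.exp (Complex.I * t * ((lam i : ℂ) - (lam j : ℂ))) with hc
  have hJ : (∫ t : ℝ, W t • (NormedSpace.exp ((Complex.I * t) • H) * A *
        NormedSpace.exp (-(Complex.I * t) • H)))
      = ∑ i, ∑ j, c i j • (E i * A * E j) := by
    have h1 : ∀ t : ℝ, W t • (NormedSpace.exp ((Complex.I * t) • H) * A *
          NormedSpace.exp (-(Complex.I * t) • H))
        = ∑ i, ∑ j, (W t * Complex.exp (Complex.I * t * ((lam i : ℂ) - (lam j : ℂ)))) •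
            (E i * A * E j) := by
      intro t
      rw [hconj t, Finset.smul_sum]
      simp_rw [Finset.smul_sum, smul_smul]
    simp_rw [h1]
    rw [integral_finset_sum _ (fun i _ => integrable_finset_sum _
        (fun j _ => (hintg2 i j).smul_const _))]
    refine Finset.sum_congr rfl fun i _ => ?_
    rw [integral_finset_sum _ (fun j _ => (hintg2 i j).smul_const _)]
    exact Finset.sum_congr rfl fun j _ => integral_smul_const _ _
  -- multiplication by H
  have hHleft : ∀ i j : Fin k, H * (E i * A * E j) = (lam i : ℂ) • (E i * A * E j) := by
    intro i j
    rw [hH, Finset.sum_mul, Finset.sum_eq_single i]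
    · rw [smul_mul_assoc, ← mul_assoc, ← mul_assoc, hEproj i]
    · intro l _ hli
      rw [smul_mul_assoc, ← mul_assoc, ← mul_assoc, hEorth l i hli, zero_mul, zero_mul, smul_zero]
    · intro h; exact absurd (Finset.mem_univ i) h
  have hHright : ∀ i j : Fin k, (E i * A * E j) * H = (lam j : ℂ) • (E i * A * E j) := by
    intro i j
    rw [hH, Finset.mul_sum, Finset.sum_eq_single j]
    · rw [mul_smul_comm, mul_assoc, hEproj j]
    · intro l _ hlj
      rw [mul_smul_comm, mul_assoc, hEorth j l (Ne.symm hlj), mul_zero, smul_zero]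
    · intro h; exact absurd (Finset.mem_univ j) h
  -- projections against P
  have hEP : ∀ i, E i * P = if i ∈ S then E i else 0 := by
    intro i
    rw [hP, Finset.mul_sum]
    by_cases hi : i ∈ S
    · rw [if_pos hi, Finset.sum_eq_single i]
      · exact hEproj i
      · exact fun j _ hji => hEorth i j (Ne.symm hji)
      · exact fun h => absurd hi h
    · rw [if_neg hi]
      exact Finset.sum_eq_zero fun j hj => hEorth i j (fun h => hi (h ▸ hj))
  have hPE : ∀ j, P * E j = if j ∈ S then E j else 0 := by
    intro j
    rw [hP, Finset.sum_mul]
    by_cases hj : j ∈ S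
    · rw [if_pos hj, Finset.sum_eq_single j]
      · exact hEproj j
      · exact fun i _ hij => hEorth i j hij
      · exact fun h => absurd hj h
    · rw [if_neg hj]
      exact Finset.sum_eq_zero fun i hi => hEorth i j (fun h => hj (h ▸ hi))
  -- block-diagonal parts of A vanish
  have hblock0 : ∀ i j : Fin k, ((i ∈ S ∧ j ∈ S) ∨ (i ∉ S ∧ j ∉ S)) → E i * A * E j = 0 := by
    intro i j hij
    have key : E i * (P * A * (1 - P) + (1 - P) * A * P) * E j
        = (E i * P) * A * ((1 - P) * E j) + (E i * (1 - P)) * A * (P * E j) := by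
      noncomm_ring
    conv_lhs => rw [hA]
    rw [key]
    have h1 : (1 - P) * E j = E j - P * E j := by rw [sub_mul, one_mul]
    have h2 : E i * (1 - P) = E i - E i * P := by rw [mul_sub, mul_one]
    rcases hij with ⟨hi, hj⟩ | ⟨hi, hj⟩
    · rw [h1, h2, hEP i, hPE j, if_pos hi, if_pos hj]
      simp
    · rw [h1, h2, hEP i, hPE j, if_neg hi, if_neg hj]
      simp
  -- the coefficient computation
  have hs : ((Real.sqrt (2 * Real.pi) : ℝ) : ℂ) ≠ 0 := by
    refine Complex.ofReal_ne_zero.mpr ?_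
    have : (0 : ℝ) < Real.sqrt (2 * Real.pi) := Real.sqrt_pos.mpr (by positivity)
    exact this.ne'
  have hcoef : ∀ i j : Fin k, γ ≤ |lam j - lam i| →
      -Complex.I * (c i j * ((lam i : ℂ) - (lam j : ℂ))) = 1 := by
    intro i j hgapij
    set ξ : ℝ := lam j - lam i with hξ
    have hξ0' : ξ ≠ 0 := by
      intro h
      rw [h] at hgapij
      simp at hgapij
      linarith
    have hξ0 : (ξ : ℂ) ≠ 0 := Complex.ofReal_ne_zero.mpr hξ0'
    have h := hW ξ hgapij
    have hint_eq : (∫ t : ℝ, Complex.exp (-(Complex.I * ξ * t)) * W t) = c i j := by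
      have harg : ∀ t : ℝ, Complex.exp (-(Complex.I * ξ * t)) * W t
          = W t * Complex.exp (Complex.I * t * ((lam i : ℂ) - (lam j : ℂ))) := by
        intro t
        rw [mul_comm]
        congr 2
        push_cast [hξ]
        ring
      simp only [hc]
      simp only [harg]
    rw [hint_eq] at h
    have hlam : ((lam i : ℂ) - (lam j : ℂ)) = -(ξ : ℂ) := by push_cast [hξ]; ring
    rw [hlam]
    generalize hgen : ((Real.sqrt (2 * Real.pi) : ℝ) : ℂ) = s at h hs
    field_simp at h
    have hcc : c i j = -(Complex.I * s) / (s * (ξ : ℂ)) :=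
      (eq_div_iff (mul_ne_zero hs hξ0)).mpr (by linear_combination s * h)
    rw [hcc]
    have h2 : -Complex.I * (-(Complex.I * s) / (s * (ξ : ℂ)) * -(ξ : ℂ))
        = -(Complex.I * Complex.I) * ((s * (ξ : ℂ)) / (s * (ξ : ℂ))) := by ring
    rw [h2, div_self (mul_ne_zero hs hξ0), Complex.I_mul_I]
    norm_num
  -- A as a sum of blocks
  have hAsum : A = ∑ i, ∑ j, E i * A * E j := by
    calc A = (∑ i, E i) * A * (∑ j, E j) := by rw [hEsum, one_mul, mul_one]
      _ = ∑ i, ∑ j, E i * A * E j := by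
          rw [Finset.sum_mul, Finset.sum_mul]
          exact Finset.sum_congr rfl fun i _ => by rw [Finset.mul_sum]
  -- the commutator
  rw [hJ]
  have hcomm : H * (∑ i, ∑ j, c i j • (E i * A * E j))
        - (∑ i, ∑ j, c i j • (E i * A * E j)) * H
      = ∑ i, ∑ j, (c i j * ((lam i : ℂ) - (lam j : ℂ))) • (E i * A * E j) := by
    rw [Finset.mul_sum, Finset.sum_mul, ← Finset.sum_sub_distrib]
    refine Finset.sum_congr rfl fun i _ => ?_
    rw [Finset.mul_sum, Finset.sum_mul, ← Finset.sum_sub_distrib]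
    refine Finset.sum_congr rfl fun j _ => ?_
    rw [mul_smul_comm, smul_mul_assoc, hHleft i j, hHright i j, smul_smul, smul_smul]
    module
  rw [hcomm, Finset.smul_sum]
  simp_rw [Finset.smul_sum, smul_smul]
  nth_rewrite 1 [hAsum]
  refine Finset.sum_congr rfl fun i _ => Finset.sum_congr rfl fun j _ => ?_
  by_cases hi : i ∈ S <;> by_cases hj : j ∈ S
  · rw [hblock0 i j (Or.inl ⟨hi, hj⟩)]
    exact (smul_zero (M := ℂ) (A := EuclideanSpace ℂ (Fin n) →L[ℂ] EuclideanSpace ℂ (Fin n)) _).symm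
  · rw [hcoef i j (by rw [abs_sub_comm]; exact hgap i hi j hj), one_smul]
  · rw [hcoef i j (hgap j hj i hi), one_smul]
  · rw [hblock0 i j (Or.inr ⟨hi, hj⟩)]
    exact (smul_zero (M := ℂ) (A := EuclideanSpace ℂ (Fin n) →L[ℂ] EuclideanSpace ℂ (Fin n)) _).symm
end

section
/- Let s ↦ H_s be a C¹ family of self-adjoint operators on a finite-dimensional Hilbert space with a spectral patch separated by a uniform gap γ > 0, and let P_s be the corresponding spectral projection (which is C¹ in s). Then Ṗ_s = i [I_s(Ḣ_s), P_s], where I_s(A) = ∫ W_γ(t) e^{itH_s} A e^{-itH_s} dt with W_γ as in the gap construction. In other words, K_s := I_s(Ḣ_s) generates the spectral flow. -/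
open MeasureTheory Complex

set_option maxHeartbeats 1000000
set_option synthInstance.maxHeartbeats 400000

lemma mul_exp_block {𝔸 : Type*} [NormedRing 𝔸] [NormedAlgebra ℂ 𝔸] [CompleteSpace 𝔸]
    (A B : 𝔸) (c : ℂ) (h : B * A = c • B) : B * NormedSpace.exp A = Complex.exp c • B := by
  have hpow : ∀ m : ℕ, B * A ^ m = c ^ m • B := by
    intro m; induction m with
    | zero => simp
    | succ m ih =>
      rw [pow_succ, ← mul_assoc, ih, smul_mul_assoc, h, smul_smul, ← pow_succ]
  have hsum := NormedSpace.expSeries_summable' (𝕂 := ℂ) A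
  have hsumc := NormedSpace.expSeries_summable' (𝕂 := ℂ) c
  calc B * NormedSpace.exp A
      = (ContinuousLinearMap.mul ℂ 𝔸 B) (∑' m : ℕ, (m.factorial : ℂ)⁻¹ • A ^ m) := by
        rw [NormedSpace.exp_eq_tsum (𝕂 := ℂ)]; rfl
    _ = ∑' m : ℕ, (ContinuousLinearMap.mul ℂ 𝔸 B) ((m.factorial : ℂ)⁻¹ • A ^ m) :=
        (ContinuousLinearMap.mul ℂ 𝔸 B).map_tsum hsum
    _ = ∑' m : ℕ, ((m.factorial : ℂ)⁻¹ • c ^ m) • B := by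
        refine tsum_congr fun m => ?_
        simp only [ContinuousLinearMap.mul_apply', mul_smul_comm, hpow, smul_smul,
          smul_eq_mul]
    _ = (∑' m : ℕ, (m.factorial : ℂ)⁻¹ • c ^ m) • B := hsumc.tsum_smul_const B
    _ = Complex.exp c • B := by rw [Complex.exp_eq_exp_ℂ, NormedSpace.exp_eq_tsum (𝕂 := ℂ)]

lemma exp_mul_block {𝔸 : Type*} [NormedRing 𝔸] [NormedAlgebra ℂ 𝔸] [CompleteSpace 𝔸]
    (A B : 𝔸) (c : ℂ) (h : A * B = c • B) : NormedSpace.exp A * B = Complex.exp c • B := by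
  have hpow : ∀ m : ℕ, A ^ m * B = c ^ m • B := by
    intro m; induction m with
    | zero => simp
    | succ m ih =>
      rw [pow_succ, mul_assoc, h, mul_smul_comm, ih, smul_smul, mul_comm, ← pow_succ]
  have hsum := NormedSpace.expSeries_summable' (𝕂 := ℂ) A
  have hsumc := NormedSpace.expSeries_summable' (𝕂 := ℂ) c
  calc NormedSpace.exp A * B
      = ((ContinuousLinearMap.mul ℂ 𝔸).flip B) (∑' m : ℕ, (m.factorial : ℂ)⁻¹ • A ^ m) := by
        rw [NormedSpace.exp_eq_tsum (𝕂 := ℂ)]; rfl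
    _ = ∑' m : ℕ, ((ContinuousLinearMap.mul ℂ 𝔸).flip B) ((m.factorial : ℂ)⁻¹ • A ^ m) :=
        ((ContinuousLinearMap.mul ℂ 𝔸).flip B).map_tsum hsum
    _ = ∑' m : ℕ, ((m.factorial : ℂ)⁻¹ • c ^ m) • B := by
        refine tsum_congr fun m => ?_
        simp only [ContinuousLinearMap.flip_apply, ContinuousLinearMap.mul_apply',
          smul_mul_assoc, hpow, smul_smul, smul_eq_mul]
    _ = (∑' m : ℕ, (m.factorial : ℂ)⁻¹ • c ^ m) • B := hsumc.tsum_smul_const B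
    _ = Complex.exp c • B := by rw [Complex.exp_eq_exp_ℂ, NormedSpace.exp_eq_tsum (𝕂 := ℂ)]

lemma sandwich_proj {R : Type*} [Ring R] (a b x : R) (ha : a * a = a) (hb : b * b = b) :
    a * (a * x * b) * b = a * x * b := by
  rw [show a * (a * x * b) * b = (a * a) * x * (b * b) by noncomm_ring, ha, hb]

lemma sandwich_zero_left {R : Type*} [Ring R] (a l x m b : R) (h : a * l = 0) :
    a * (l * x * m) * b = 0 := by
  rw [show a * (l * x * m) * b = (a * l) * (x * (m * b)) by noncomm_ring, h, zero_mul]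

lemma sandwich_zero_right {R : Type*} [Ring R] (a l x m b : R) (h : m * b = 0) :
    a * (l * x * m) * b = 0 := by
  rw [show a * (l * x * m) * b = (a * (l * x)) * (m * b) by noncomm_ring, h, mul_zero]

/-- the generator of the spectral flow: `Ṗ = i [I(Ḣ), P]`. -/
theorem spectral_flow_generator (n k : ℕ)
    (H P : ℝ → (EuclideanSpace ℂ (Fin n) →L[ℂ] EuclideanSpace ℂ (Fin n)))
    (H' P' : EuclideanSpace ℂ (Fin n) →L[ℂ] EuclideanSpace ℂ (Fin n))
    (s₀ : ℝ) (γ : ℝ) (hγ : 0 < γ)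
    (hHsa : ∀ s, star (H s) = H s)
    (hPproj : ∀ s, P s * P s = P s) (hPsa : ∀ s, star (P s) = P s)
    (hcomm : ∀ s, H s * P s = P s * H s)
    (hHd : HasDerivAt H H' s₀) (hPd : HasDerivAt P P' s₀)
    (lam : Fin k → ℝ)
    (E : Fin k → (EuclideanSpace ℂ (Fin n) →L[ℂ] EuclideanSpace ℂ (Fin n)))
    (hEproj : ∀ i, E i * E i = E i) (hEsa : ∀ i, star (E i) = E i)
    (hEorth : ∀ i j, i ≠ j → E i * E j = 0)
    (hEsum : ∑ i, E i = 1)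
    (hHs₀ : H s₀ = ∑ i, (lam i : ℂ) • E i)
    (S : Finset (Fin k)) (hPs₀ : P s₀ = ∑ i ∈ S, E i)
    (hgap : ∀ i ∈ S, ∀ j ∉ S, γ ≤ |lam i - lam j|)
    (W : ℝ → ℂ) (hWint : Integrable W)
    (hW : ∀ ξ : ℝ, γ ≤ |ξ| →
      (1 / (Real.sqrt (2 * Real.pi) : ℂ)) *
          (∫ t : ℝ, Complex.exp (-(Complex.I * ξ * t)) * W t)
        = -Complex.I / ((Real.sqrt (2 * Real.pi) : ℂ) * ξ)) :
    let K := ∫ t : ℝ, W t • (NormedSpace.exp ((Complex.I * t) • H s₀) * H' *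
                NormedSpace.exp (-(Complex.I * t) • H s₀))
    P' = Complex.I • (K * P s₀ - P s₀ * K) := by
  intro K
  have hKdef : K = ∫ t : ℝ, W t • (NormedSpace.exp ((Complex.I * t) • H s₀) * H' *
                NormedSpace.exp (-(Complex.I * t) • H s₀)) := rfl
  clear_value K
  -- basic block relations
  have horth : ∀ i l : Fin k, E i * E l = if l = i then E i else 0 := by
    intro i l
    by_cases h : l = i
    · subst h; simp [hEproj]
    · simp [h, hEorth i l (fun hh => h hh.symm)]
  have hHE : ∀ j, H s₀ * E j = ((lam j : ℂ)) • E j := by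
    intro j
    rw [hHs₀, Finset.sum_mul]
    rw [Finset.sum_eq_single j]
    · rw [smul_mul_assoc, hEproj]
    · intro i _ hij
      rw [smul_mul_assoc, hEorth i j hij]; module
    · intro h; exact absurd (Finset.mem_univ j) h
  have hEH : ∀ i, E i * H s₀ = ((lam i : ℂ)) • E i := by
    intro i
    rw [hHs₀, Finset.mul_sum]
    rw [Finset.sum_eq_single i]
    · rw [mul_smul_comm, hEproj]
    · intro j _ hij
      rw [mul_smul_comm, hEorth i j (fun hh => hij hh.symm)]; module
    · intro h; exact absurd (Finset.mem_univ i) h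
  -- expansion of the exponentials
  have hexp1 : ∀ t : ℝ, NormedSpace.exp ((Complex.I * t) • H s₀)
      = ∑ i, Complex.exp (Complex.I * t * lam i) • E i := by
    intro t
    have h1 : ∀ i, NormedSpace.exp ((Complex.I * t) • H s₀) * E i
        = Complex.exp (Complex.I * t * lam i) • E i := by
      intro i
      refine exp_mul_block _ _ _ ?_
      rw [smul_mul_assoc, hHE, smul_smul]
    calc NormedSpace.exp ((Complex.I * t) • H s₀)
        = NormedSpace.exp ((Complex.I * t) • H s₀) * ∑ i, E i := by rw [hEsum, mul_one]
      _ = ∑ i, Complex.exp (Complex.I * t * lam i) • E i := by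
          rw [Finset.mul_sum]; exact Finset.sum_congr rfl fun i _ => h1 i
  have hexp2 : ∀ t : ℝ, NormedSpace.exp (-(Complex.I * t) • H s₀)
      = ∑ i, Complex.exp (-(Complex.I * t * lam i)) • E i := by
    intro t
    have h1 : ∀ i, NormedSpace.exp (-(Complex.I * t) • H s₀) * E i
        = Complex.exp (-(Complex.I * t * lam i)) • E i := by
      intro i
      refine exp_mul_block _ _ _ ?_
      rw [smul_mul_assoc, hHE, smul_smul]
      ring_nf
    calc NormedSpace.exp (-(Complex.I * t) • H s₀)
        = NormedSpace.exp (-(Complex.I * t) • H s₀) * ∑ i, E i := by rw [hEsum, mul_one]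
      _ = ∑ i, Complex.exp (-(Complex.I * t * lam i)) • E i := by
          rw [Finset.mul_sum]; exact Finset.sum_congr rfl fun i _ => h1 i
  -- the scalar integrals
  set c : Fin k → Fin k → ℂ := fun i j =>
    ∫ t : ℝ, W t * (Complex.exp (Complex.I * t * lam i) * Complex.exp (-(Complex.I * t * lam j)))
    with hc
  have hintc : ∀ i j, Integrable (fun t : ℝ =>
      W t * (Complex.exp (Complex.I * t * lam i) * Complex.exp (-(Complex.I * t * lam j)))) := by
    intro i j
    refine hWint.norm.mono' ?_ ?_
    · refine hWint.aestronglyMeasurable.mul ?_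
      refine Continuous.aestronglyMeasurable ?_
      fun_prop
    · refine Filter.Eventually.of_forall fun t => ?_
      have h1 : ‖Complex.exp (Complex.I * t * lam i)‖ = 1 := by
        rw [Complex.norm_exp]; norm_num [Complex.mul_re, Complex.mul_im]
      have h2 : ‖Complex.exp (-(Complex.I * t * lam j))‖ = 1 := by
        rw [Complex.norm_exp]; norm_num [Complex.mul_re, Complex.mul_im]
      refine le_of_eq ?_
      simp [norm_mul, h1, h2]
  -- K as a double sum of blocks
  have hK : K = ∑ i, ∑ j, c i j • (E i * H' * E j) := by
    have hfun : (fun t : ℝ => W t • (NormedSpace.exp ((Complex.I * t) • H s₀) * H' *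
        NormedSpace.exp (-(Complex.I * t) • H s₀)))
        = fun t : ℝ => ∑ i, ∑ j,
          (W t * (Complex.exp (Complex.I * t * lam i) * Complex.exp (-(Complex.I * t * lam j))))
            • (E i * H' * E j) := by
      funext t
      rw [hexp1 t, hexp2 t]
      simp only [Finset.sum_mul, Finset.mul_sum, smul_mul_assoc, mul_smul_comm, Finset.smul_sum,
        smul_smul, mul_assoc]
      rw [Finset.sum_comm]
      simp [mul_comm]
    rw [hKdef, hfun]
    rw [integral_finset_sum _ (fun i _ => integrable_finset_sum _ (fun j _ =>
      (hintc i j).smul_const _))]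
    refine Finset.sum_congr rfl fun i _ => ?_
    rw [integral_finset_sum _ (fun j _ => (hintc i j).smul_const _)]
    exact Finset.sum_congr rfl fun j _ => integral_smul_const _ _
  -- value of c on gapped pairs
  have hcval : ∀ i j, γ ≤ |lam i - lam j| →
      c i j = Complex.I / ((lam i : ℂ) - lam j) := by
    intro i j hij
    have hξ : γ ≤ |lam j - lam i| := by rwa [abs_sub_comm]
    have h0 : ((lam j : ℝ) - lam i) ≠ 0 := by
      intro h; rw [h] at hξ; simp at hξ; linarith
    have h0' : ((lam j : ℂ) - lam i) ≠ 0 := by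
      intro h; apply h0
      have := congrArg Complex.re h
      simpa using this
    have h0'' : ((lam i : ℂ) - lam j) ≠ 0 := by
      intro h; apply h0'; linear_combination -h
    have hfun : (fun t : ℝ => Complex.exp (-(Complex.I * ((lam j - lam i : ℝ) : ℂ) * t)) * W t)
        = fun t : ℝ => W t * (Complex.exp (Complex.I * t * lam i) *
            Complex.exp (-(Complex.I * t * lam j))) := by
      funext t
      rw [mul_comm, ← Complex.exp_add]
      congr 1
      push_cast
      ring
    have heq := hW (lam j - lam i) hξ
    rw [hfun] at heq
    have hsqrt : ((Real.sqrt (2 * Real.pi) : ℂ)) ≠ 0 := by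
      have h : (0:ℝ) < Real.sqrt (2 * Real.pi) := Real.sqrt_pos.mpr (by positivity)
      exact_mod_cast ne_of_gt h
    rw [hc]
    simp only []
    rw [Complex.ofReal_sub] at heq
    have hs2 : ((Real.sqrt 2 : ℝ) : ℂ) ≠ 0 := by
      have h : (0:ℝ) < Real.sqrt 2 := Real.sqrt_pos.mpr (by norm_num)
      exact_mod_cast ne_of_gt h
    have hsp : ((Real.sqrt Real.pi : ℝ) : ℂ) ≠ 0 := by
      have h : (0:ℝ) < Real.sqrt Real.pi := Real.sqrt_pos.mpr Real.pi_pos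
      exact_mod_cast ne_of_gt h
    field_simp [hs2, hsp, h0'] at heq
    rw [eq_div_iff h0'']
    refine mul_right_cancel₀ (mul_ne_zero hs2 hsp) ?_
    simp only [mul_assoc] at heq ⊢
    linear_combination -(((Real.sqrt 2 : ℝ) : ℂ) * ((Real.sqrt Real.pi : ℝ) : ℂ)) * heq
  -- products with P s₀
  have hEQ : ∀ j, E j * P s₀ = if j ∈ S then E j else 0 := by
    intro j
    rw [hPs₀, Finset.mul_sum]
    rw [Finset.sum_congr rfl (fun l _ => horth j l)]
    exact Finset.sum_ite_eq' S j (fun _ => E j)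
  have hQE : ∀ i, P s₀ * E i = if i ∈ S then E i else 0 := by
    intro i
    rw [hPs₀, Finset.sum_mul]
    rw [Finset.sum_congr rfl (fun l _ => horth l i)]
    exact Finset.sum_ite_eq S i E
  -- sandwich helpers
  have e1 : ∀ (i j : Fin k) (X : EuclideanSpace ℂ (Fin n) →L[ℂ] EuclideanSpace ℂ (Fin n)),
      E i * (X * P s₀) * E j = if j ∈ S then E i * X * E j else 0 := by
    intro i j X
    rw [show E i * (X * P s₀) * E j = (E i * X) * (P s₀ * E j) by noncomm_ring, hQE j]
    split_ifs with h
    · rfl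
    · rw [mul_zero]
  have e2 : ∀ (i j : Fin k) (X : EuclideanSpace ℂ (Fin n) →L[ℂ] EuclideanSpace ℂ (Fin n)),
      E i * (P s₀ * X) * E j = if i ∈ S then E i * X * E j else 0 := by
    intro i j X
    rw [show E i * (P s₀ * X) * E j = (E i * P s₀) * (X * E j) by noncomm_ring, hEQ i]
    split_ifs with h
    · rfl
    · rw [zero_mul]
  -- derivative identities
  have hP'eq : P' * P s₀ + P s₀ * P' = P' := by
    have h1 : HasDerivAt (fun s => P s * P s) (P' * P s₀ + P s₀ * P') s₀ := hPd.mul hPd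
    rw [funext hPproj] at h1
    exact h1.unique hPd
  have hHP' : H' * P s₀ + H s₀ * P' = P' * H s₀ + P s₀ * H' := by
    have h1 : HasDerivAt (fun s => H s * P s) (H' * P s₀ + H s₀ * P') s₀ := hHd.mul hPd
    have h2 : HasDerivAt (fun s => P s * H s) (P' * H s₀ + P s₀ * H') s₀ := hPd.mul hHd
    rw [funext hcomm] at h1
    exact h1.unique h2
  -- block collapse for K
  have hEKE : ∀ i j, E i * K * E j = c i j • (E i * H' * E j) := by
    intro i j
    have hterm : ∀ l m : Fin k, E i * (c l m • (E l * H' * E m)) * E j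
        = if l = i then (if m = j then c i j • (E i * H' * E j) else 0) else 0 := by
      intro l m
      rw [mul_smul_comm, smul_mul_assoc]
      by_cases hl : l = i
      · subst hl
        by_cases hm : m = j
        · subst hm
          rw [if_pos rfl, if_pos rfl]
          congr 1
          exact sandwich_proj _ _ _ (hEproj _) (hEproj _)
        · rw [if_pos rfl, if_neg hm]
          rw [sandwich_zero_right _ _ _ _ _ (hEorth m j hm)]
          module
      · rw [if_neg hl]
        rw [sandwich_zero_left _ _ _ _ _ (hEorth i l (fun h => hl h.symm))]
        module
    rw [hK]
    simp only [Finset.mul_sum, Finset.sum_mul]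
    rw [Finset.sum_congr rfl (fun l _ => Finset.sum_congr rfl (fun m _ => hterm l m))]
    simp
  -- block form of the RHS
  have hR : ∀ i j, E i * (Complex.I • (K * P s₀ - P s₀ * K)) * E j
      = Complex.I • ((if j ∈ S then E i * K * E j else 0)
          - (if i ∈ S then E i * K * E j else 0)) := by
    intro i j
    rw [mul_smul_comm, smul_mul_assoc]
    congr 1
    rw [mul_sub, sub_mul, e1 i j K, e2 i j K]
  -- blockwise identity
  have hblock : ∀ i j, E i * P' * E j = E i * (Complex.I • (K * P s₀ - P s₀ * K)) * E j := by
    intro i j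
    have hP := congrArg (fun X => E i * X * E j) hP'eq
    simp only [mul_add, add_mul] at hP
    rw [e1 i j P', e2 i j P'] at hP
    have hH := congrArg (fun X => E i * X * E j) hHP'
    simp only [mul_add, add_mul] at hH
    rw [e1 i j H', e2 i j H'] at hH
    have hHl : E i * (H s₀ * P') * E j = (lam i : ℂ) • (E i * P' * E j) := by
      rw [show E i * (H s₀ * P') * E j = (E i * H s₀) * (P' * E j) by noncomm_ring, hEH i,
        smul_mul_assoc, ← mul_assoc]
    have hHr : E i * (P' * H s₀) * E j = (lam j : ℂ) • (E i * P' * E j) := by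
      rw [show E i * (P' * H s₀) * E j = (E i * P') * (H s₀ * E j) by noncomm_ring, hHE j,
        mul_smul_comm]
    rw [hHl, hHr] at hH
    rw [hR i j, hEKE i j]
    by_cases hi : i ∈ S <;> by_cases hj : j ∈ S
    · -- both in S
      rw [if_pos hi, if_pos hj] at hP
      rw [if_pos hi, if_pos hj]
      have hz : E i * P' * E j = 0 := by linear_combination (norm := module) hP
      rw [hz]; module
    · -- i ∈ S, j ∉ S
      rw [if_pos hi, if_neg hj] at hH
      rw [if_pos hi, if_neg hj]
      have hd : ((lam i : ℂ) - lam j) ≠ 0 := by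
        have hne : lam i ≠ lam j := by
          intro h
          have := hgap i hi j hj
          rw [h] at this; simp at this; linarith
        exact sub_ne_zero.mpr (by exact_mod_cast hne)
      have hX : ((lam i : ℂ) - lam j) • (E i * P' * E j) = E i * H' * E j := by
        linear_combination (norm := module) hH
      have hX' : E i * P' * E j = ((lam i : ℂ) - lam j)⁻¹ • (E i * H' * E j) := by
        rw [← hX, smul_smul, inv_mul_cancel₀ hd, one_smul]
      rw [hX', hcval i j (hgap i hi j hj)]
      match_scalars
      ring_nf
      rw [Complex.I_sq]
      ring
    · -- i ∉ S, j ∈ S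
      rw [if_neg hi, if_pos hj] at hH
      rw [if_neg hi, if_pos hj]
      have hgap'' : γ ≤ |lam i - lam j| := by rw [abs_sub_comm]; exact hgap j hj i hi
      have hd : ((lam i : ℂ) - lam j) ≠ 0 := by
        have hne : lam i ≠ lam j := by
          intro h
          rw [h] at hgap''; simp at hgap''; linarith
        exact sub_ne_zero.mpr (by exact_mod_cast hne)
      have hX : ((lam i : ℂ) - lam j) • (E i * P' * E j) = -(E i * H' * E j) := by
        linear_combination (norm := module) hH
      have hX' : E i * P' * E j = ((lam i : ℂ) - lam j)⁻¹ • (-(E i * H' * E j)) := by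
        rw [← hX, smul_smul, inv_mul_cancel₀ hd, one_smul]
      rw [hX', hcval i j hgap'']
      match_scalars
      ring_nf
      rw [Complex.I_sq]
      ring
    · -- both out of S
      rw [if_neg hi, if_neg hj] at hP
      rw [if_neg hi, if_neg hj]
      have hz : E i * P' * E j = 0 := by linear_combination (norm := module) -hP
      rw [hz]; module
  -- reassemble from blocks
  have decomp : ∀ X : EuclideanSpace ℂ (Fin n) →L[ℂ] EuclideanSpace ℂ (Fin n),
      X = ∑ i, ∑ j, E i * X * E j := by
    intro X
    conv_lhs => rw [← one_mul X, ← mul_one (1 * X), ← hEsum]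
    rw [Finset.mul_sum, Finset.sum_comm]
    refine Finset.sum_congr rfl fun j _ => ?_
    rw [Finset.sum_mul, Finset.sum_mul]
  calc P' = ∑ i, ∑ j, E i * P' * E j := decomp P'
    _ = ∑ i, ∑ j, E i * (Complex.I • (K * P s₀ - P s₀ * K)) * E j :=
        Finset.sum_congr rfl fun i _ => Finset.sum_congr rfl fun j _ => hblock i j
    _ = Complex.I • (K * P s₀ - P s₀ * K) := (decomp _).symm
end

section
/- Let H be self-adjoint on a finite-dimensional Hilbert space with spectral projection P onto a patch Σ¹ separated by a gap γ > 0 from the rest of the spectrum. If A is block off-diagonal with respect to P (A = PA(1-P) + (1-P)AP), then the regularized integral i ∫₀^∞ e^{-δt} e^{-itH} [H, A] e^{itH} dt converges to A as δ ↓ 0. -/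
open MeasureTheory Complex Filter Topology

set_option maxHeartbeats 1000000
set_option synthInstance.maxHeartbeats 1000000

section Aux

variable {𝔸 : Type*} [NormedRing 𝔸] [NormedAlgebra ℂ 𝔸] [CompleteSpace 𝔸]

lemma exp_mul_eigen (M e : 𝔸) (a : ℂ) (h : M * e = a • e) :
    NormedSpace.exp M * e = Complex.exp a • e := by
  have hpow : ∀ m : ℕ, M ^ m * e = (a ^ m) • e := by
    intro m
    induction m with
    | zero => simp
    | succ m ih =>
      rw [pow_succ, mul_assoc, h, mul_smul_comm, ih, smul_smul, pow_succ, mul_comm]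
  rw [NormedSpace.exp_eq_tsum (𝕂 := ℂ)]
  rw [← (NormedSpace.expSeries_summable' (𝕂 := ℂ) M).tsum_mul_right e]
  have hterm : ∀ m : ℕ, ((Nat.factorial m : ℂ)⁻¹ • M ^ m) * e = ((Nat.factorial m : ℂ)⁻¹ * a ^ m) • e := by
    intro m
    rw [smul_mul_assoc, hpow, smul_smul]
  simp_rw [hterm]
  have hs : Summable fun m : ℕ => (Nat.factorial m : ℂ)⁻¹ * a ^ m := by
    simpa [smul_eq_mul] using NormedSpace.expSeries_summable' (𝕂 := ℂ) a
  rw [hs.tsum_smul_const, Complex.exp_eq_exp_ℂ, NormedSpace.exp_eq_tsum (𝕂 := ℂ)]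
  simp [smul_eq_mul]

end Aux

lemma integrableOn_cexp_neg_mul (a : ℂ) (ha : 0 < a.re) :
    IntegrableOn (fun t : ℝ => Complex.exp (-(a * t))) (Set.Ioi (0:ℝ)) := by
  have hnorm : ∀ t : ℝ, ‖Complex.exp (-(a * t))‖ = Real.exp (-a.re * t) := by
    intro t
    rw [Complex.norm_exp]
    congr 1
    simp [Complex.mul_re]
  refine Integrable.mono' (exp_neg_integrableOn_Ioi 0 ha)
    ((Continuous.aestronglyMeasurable (by continuity)).restrict) ?_
  filter_upwards with t
  rw [hnorm]

lemma integral_cexp_neg_mul_Ioi (a : ℂ) (ha : 0 < a.re) :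
    ∫ t in Set.Ioi (0:ℝ), Complex.exp (-(a * t)) = 1 / a := by
  have hne : a ≠ 0 := fun h => by simp [h] at ha
  have hderiv : ∀ t : ℝ, HasDerivAt (fun t : ℝ => -a⁻¹ * Complex.exp (-(a * t)))
      (Complex.exp (-(a * t))) t := by
    intro t
    have h1 : HasDerivAt (fun z : ℂ => -a⁻¹ * Complex.exp (-(a * z)))
        (-a⁻¹ * (Complex.exp (-(a * (t:ℂ))) * -a)) (t : ℂ) := by
      simpa using (((hasDerivAt_id (t : ℂ)).const_mul a).neg.cexp).const_mul (-a⁻¹)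
    have h2 := h1.comp_ofReal (z := t)
    convert h2 using 1
    field_simp
  have htend : Tendsto (fun t : ℝ => -a⁻¹ * Complex.exp (-(a * t))) atTop (𝓝 0) := by
    rw [show (0:ℂ) = -a⁻¹ * 0 by ring]
    refine Tendsto.const_mul _ ?_
    rw [tendsto_zero_iff_norm_tendsto_zero]
    have : Tendsto (fun t : ℝ => Real.exp (-(a.re * t))) atTop (𝓝 0) :=
      Real.tendsto_exp_neg_atTop_nhds_zero.comp
        (Tendsto.const_mul_atTop ha tendsto_id)
    refine this.congr fun t => ?_
    rw [Complex.norm_exp]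
    congr 1
    simp [Complex.mul_re]
  have := integral_Ioi_of_hasDerivAt_of_tendsto' (f := fun t : ℝ => -a⁻¹ * Complex.exp (-(a * t)))
    (fun t _ => hderiv t) (integrableOn_cexp_neg_mul a ha) htend
  rw [this]
  simp [one_div]

/-- for off-diagonal `A`, `i ∫₀^∞ e^{-δt} τ_{-t}([H,A]) dt → A` as `δ ↓ 0`. -/
theorem regularized_integral_converges (n k : ℕ)
    (H P A : EuclideanSpace ℂ (Fin n) →L[ℂ] EuclideanSpace ℂ (Fin n))
    (γ : ℝ) (hγ : 0 < γ)
    (lam : Fin k → ℝ)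
    (E : Fin k → (EuclideanSpace ℂ (Fin n) →L[ℂ] EuclideanSpace ℂ (Fin n)))
    (hEproj : ∀ i, E i * E i = E i) (hEsa : ∀ i, star (E i) = E i)
    (hEorth : ∀ i j, i ≠ j → E i * E j = 0)
    (hEsum : ∑ i, E i = 1)
    (hH : H = ∑ i, (lam i : ℂ) • E i)
    (S : Finset (Fin k)) (hP : P = ∑ i ∈ S, E i)
    (hgap : ∀ i ∈ S, ∀ j ∉ S, γ ≤ |lam i - lam j|)
    (hA : A = P * A * (1 - P) + (1 - P) * A * P) :
    Tendsto (fun δ : ℝ => Complex.I •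
        ∫ t in Set.Ioi (0:ℝ), (Real.exp (-(δ * t)) : ℂ) •
          (NormedSpace.exp (-(Complex.I * t) • H) * (H * A - A * H) *
            NormedSpace.exp ((Complex.I * t) • H)))
      (nhdsWithin 0 (Set.Ioi 0)) (nhds A) := by
  classical
  set T : Fin k → Fin k → (EuclideanSpace ℂ (Fin n) →L[ℂ] EuclideanSpace ℂ (Fin n)) :=
    fun i j => E i * A * E j with hT
  set μ : Fin k → Fin k → ℂ := fun i j => (lam i : ℂ) - lam j with hμ
  -- basic eigen-relations
  have hHE : ∀ j, H * E j = (lam j : ℂ) • E j := by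
    intro j
    rw [hH, Finset.sum_mul]
    rw [Finset.sum_eq_single j]
    · rw [smul_mul_assoc, hEproj]
    · intro i _ hij
      rw [smul_mul_assoc, hEorth i j hij]
      module
    · intro h; exact absurd (Finset.mem_univ j) h
  have hEH : ∀ i, E i * H = (lam i : ℂ) • E i := by
    intro i
    rw [hH, Finset.mul_sum]
    rw [Finset.sum_eq_single i]
    · rw [mul_smul_comm, hEproj]
    · intro j _ hji
      rw [mul_smul_comm, hEorth i j (Ne.symm hji)]
      module
    · intro h; exact absurd (Finset.mem_univ i) h
  have hexp : ∀ c : ℂ, NormedSpace.exp (c • H) = ∑ i, Complex.exp (c * lam i) • E i := by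
    intro c
    have : NormedSpace.exp (c • H) * (∑ i, E i) = ∑ i, Complex.exp (c * lam i) • E i := by
      rw [Finset.mul_sum]
      refine Finset.sum_congr rfl fun i _ => ?_
      refine exp_mul_eigen _ _ _ ?_
      rw [smul_mul_assoc, hHE, smul_smul]
    rw [hEsum, mul_one] at this
    exact this
  -- block structure of the commutator
  have hblock : ∀ i j, E i * (H * A - A * H) * E j = μ i j • T i j := by
    intro i j
    rw [mul_sub, sub_mul]
    have h1 : E i * (H * A) * E j = (lam i : ℂ) • T i j := by
      rw [← mul_assoc, hEH, smul_mul_assoc, smul_mul_assoc]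
    have h2 : E i * (A * H) * E j = (lam j : ℂ) • T i j := by
      rw [mul_assoc, mul_assoc, hHE, mul_smul_comm, mul_smul_comm, ← mul_assoc]
    rw [h1, h2]
    have hμeq : μ i j = (lam i : ℂ) - lam j := rfl
    rw [hμeq]
    module
  -- pointwise formula for the integrand
  have hpoint : ∀ (δ : ℝ) (t : ℝ),
      (Real.exp (-(δ * t)) : ℂ) •
        (NormedSpace.exp (-(Complex.I * t) • H) * (H * A - A * H) *
          NormedSpace.exp ((Complex.I * t) • H)) =
      ∑ i, ∑ j, (μ i j * Complex.exp (-(((δ:ℂ) + Complex.I * μ i j) * t))) • T i j := by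
    intro δ t
    rw [hexp, hexp]
    rw [Finset.sum_mul, Finset.sum_mul, Finset.smul_sum]
    refine Finset.sum_congr rfl fun i _ => ?_
    rw [smul_mul_assoc, smul_mul_assoc, Finset.mul_sum, Finset.smul_sum, Finset.smul_sum]
    refine Finset.sum_congr rfl fun j _ => ?_
    rw [mul_smul_comm, hblock i j]
    simp only [smul_smul]
    congr 1
    have hμeq : μ i j = (lam i : ℂ) - lam j := rfl
    rw [hμeq, Complex.ofReal_exp,
      show -(((δ:ℂ) + Complex.I * ((lam i : ℂ) - lam j)) * (t:ℂ)) =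
        ((-(δ * t) : ℝ) : ℂ) + (-(Complex.I * (t:ℂ)) * (lam i : ℂ) +
          (Complex.I * (t:ℂ)) * (lam j : ℂ)) by push_cast; ring,
      Complex.exp_add, Complex.exp_add]
    ring
  -- value of the integral for δ > 0
  have hint : ∀ δ : ℝ, 0 < δ →
      (∫ t in Set.Ioi (0:ℝ), (Real.exp (-(δ * t)) : ℂ) •
          (NormedSpace.exp (-(Complex.I * t) • H) * (H * A - A * H) *
            NormedSpace.exp ((Complex.I * t) • H))) =
      ∑ i, ∑ j, (μ i j / ((δ:ℂ) + Complex.I * μ i j)) • T i j := by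
    intro δ hδ
    have hre : ∀ i j : Fin k, (0:ℝ) < ((δ:ℂ) + Complex.I * μ i j).re := by
      intro i j
      have : ((δ:ℂ) + Complex.I * μ i j).re = δ := by
        rw [hμ]; simp
      rw [this]; exact hδ
    have hInt : ∀ i j : Fin k,
        Integrable (fun t : ℝ => (μ i j * Complex.exp (-(((δ:ℂ) + Complex.I * μ i j) * t))) • T i j)
          (volume.restrict (Set.Ioi (0:ℝ))) := by
      intro i j
      exact (((integrableOn_cexp_neg_mul _ (hre i j)).const_mul (μ i j))).smul_const (T i j)
    simp_rw [hpoint δ]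
    rw [integral_finset_sum _ (fun i _ => integrable_finset_sum _ (fun j _ => hInt i j))]
    refine Finset.sum_congr rfl fun i _ => ?_
    rw [integral_finset_sum _ (fun j _ => hInt i j)]
    refine Finset.sum_congr rfl fun j _ => ?_
    rw [integral_smul_const]
    congr 1
    rw [MeasureTheory.integral_const_mul, integral_cexp_neg_mul_Ioi _ (hre i j), mul_one_div]
  -- vanishing of diagonal blocks
  have hEP : ∀ i ∈ S, E i * P = E i ∧ P * E i = E i := by
    intro i hi
    constructor
    · rw [hP, Finset.mul_sum, Finset.sum_eq_single_of_mem i hi]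
      · exact hEproj i
      · intro j _ hji; exact hEorth i j (Ne.symm hji)
    · rw [hP, Finset.sum_mul, Finset.sum_eq_single_of_mem i hi]
      · exact hEproj i
      · intro j _ hji; exact hEorth j i hji
  have hEP' : ∀ i, i ∉ S → E i * P = 0 ∧ P * E i = 0 := by
    intro i hi
    constructor
    · rw [hP, Finset.mul_sum]
      refine Finset.sum_eq_zero fun j hj => hEorth i j ?_
      rintro rfl; exact hi hj
    · rw [hP, Finset.sum_mul]
      refine Finset.sum_eq_zero fun j hj => hEorth j i ?_
      rintro rfl; exact hi hj
  have hT0 : ∀ i j, lam i = lam j → T i j = 0 := by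
    intro i j hlam
    have hmem : (i ∈ S ∧ j ∈ S) ∨ (i ∉ S ∧ j ∉ S) := by
      by_cases hi : i ∈ S <;> by_cases hj : j ∈ S
      · exact Or.inl ⟨hi, hj⟩
      · exfalso
        have := hgap i hi j hj
        rw [hlam, sub_self, abs_zero] at this
        linarith
      · exfalso
        have := hgap j hj i hi
        rw [hlam, sub_self, abs_zero] at this
        linarith
      · exact Or.inr ⟨hi, hj⟩
    have key : E i * A * E j =
        (E i * P) * A * ((1 - P) * E j) + (E i * (1 - P)) * A * (P * E j) := by
      conv_lhs => rw [hA]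
      noncomm_ring
    rcases hmem with ⟨hi, hj⟩ | ⟨hi, hj⟩
    · have h1 := (hEP i hi).1
      have h2 := (hEP j hj).2
      have h3 : (1 - P) * E j = 0 := by rw [sub_mul, one_mul, h2, sub_self]
      have h4 : E i * (1 - P) = 0 := by rw [mul_sub, mul_one, h1, sub_self]
      show E i * A * E j = 0
      rw [key, h3, h4]
      simp
    · have h1 := (hEP' i hi).1
      have h2 := (hEP' j hj).2
      show E i * A * E j = 0
      rw [key, h1, h2]
      simp
  -- total sum of blocks is A
  have hsumT : ∑ i, ∑ j, T i j = A := by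
    have : ∀ i, ∑ j, T i j = E i * A := by
      intro i
      show ∑ j, E i * A * E j = E i * A
      rw [← Finset.mul_sum, hEsum, mul_one]
    simp_rw [this]
    rw [← Finset.sum_mul, hEsum, one_mul]
  -- the limit
  have hfinal : Tendsto (fun δ : ℝ =>
      ∑ i, ∑ j, ((Complex.I * μ i j) / ((δ:ℂ) + Complex.I * μ i j)) • T i j)
      (nhdsWithin 0 (Set.Ioi 0)) (nhds A) := by
    rw [← hsumT]
    refine tendsto_finset_sum _ fun i _ => tendsto_finset_sum _ fun j _ => ?_
    by_cases hlam : lam i = lam j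
    · have hμ0 : μ i j = 0 := by
        show (lam i : ℂ) - lam j = 0
        rw [hlam, sub_self]
      have hT0' := hT0 i j hlam
      rw [hT0', hμ0]
      exact Tendsto.congr (fun δ => by module) tendsto_const_nhds
    · have hμne : μ i j ≠ 0 := by
        rw [hμ]
        intro h
        apply hlam
        exact_mod_cast sub_eq_zero.mp h
      have hIμ : Complex.I * μ i j ≠ 0 := mul_ne_zero Complex.I_ne_zero hμne
      have hc : Tendsto (fun δ : ℝ => (Complex.I * μ i j) / ((δ:ℂ) + Complex.I * μ i j))
          (nhds 0) (nhds 1) := by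
        have h1 : Tendsto (fun δ : ℝ => ((δ:ℂ) + Complex.I * μ i j)) (nhds 0)
            (nhds ((0:ℂ) + Complex.I * μ i j)) := by
          exact ((Complex.continuous_ofReal.tendsto 0).add tendsto_const_nhds)
        have := (tendsto_const_nhds (x := Complex.I * μ i j)).div h1 (by simpa using hIμ)
        simpa [div_self hIμ, Pi.div_def] using this
      have := (hc.mono_left (nhdsWithin_le_nhds (s := Set.Ioi (0:ℝ)))).smul_const (T i j)
      simpa using this
  refine Tendsto.congr' ?_ hfinal
  filter_upwards [self_mem_nhdsWithin] with δ hδ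
  rw [hint δ hδ, Finset.smul_sum]
  refine Finset.sum_congr rfl fun i _ => ?_
  rw [Finset.smul_sum]
  refine Finset.sum_congr rfl fun j _ => ?_
  rw [smul_smul, mul_div_assoc]
end

section
/- Let f : ℝ≥0 → ℝ be nondecreasing with f(0) > 0 and suppose f(x) - m·log(x) → +∞ as x → ∞ for every m > 0. Then the subadditive minorant f̂(x) = inf{∑ f(x_i) : ∑ x_i = x, x_i > 0} also satisfies f̂(x) - m·log(x) → +∞ as x → ∞ for every m > 0. -/
open Filter Topology

/-- The subadditive minorant `f̂(x) = inf {∑ f(xᵢ) : xᵢ > 0, ∑ xᵢ = x}`. -/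
noncomputable def subadditiveMinorant (f : ℝ → ℝ) (x : ℝ) : ℝ :=
  sInf {y | ∃ l : List ℝ, (∀ z ∈ l, 0 < z) ∧ l.sum = x ∧ (l.map f).sum = y}

/-- if `f(x) - m log x → ∞` for every `m > 0`, then the same holds for `f̂`. -/
theorem subadditiveMinorant_log_growth (f : ℝ → ℝ)
    (hmono : ∀ x y, 0 ≤ x → x ≤ y → f x ≤ f y) (hf0 : 0 < f 0)
    (hgrow : ∀ m : ℝ, 0 < m → Tendsto (fun x => f x - m * Real.log x) atTop atTop) :
    ∀ m : ℝ, 0 < m →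
      Tendsto (fun x => subadditiveMinorant f x - m * Real.log x) atTop atTop := by
  intro m hm
  set M : ℝ := m + 1 with hM
  have hMpos : 0 < M := by positivity
  -- get a threshold y ≥ 1 beyond which f x ≥ M log (2x)
  obtain ⟨y0, hy0⟩ := eventually_atTop.mp ((hgrow M hMpos).eventually_ge_atTop (M * Real.log 2))
  set y : ℝ := max y0 1 with hy
  have hy1 : (1:ℝ) ≤ y := le_max_right _ _
  have hypos : 0 < y := lt_of_lt_of_le one_pos hy1
  have hfy : ∀ x, y ≤ x → M * Real.log (2 * x) ≤ f x := by
    intro x hx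
    have h := hy0 x (le_trans (le_max_left _ _) hx)
    have hxpos : 0 < x := lt_of_lt_of_le hypos hx
    rw [Real.log_mul (by norm_num) (ne_of_gt hxpos)]
    nlinarith
  -- choose k
  set k : ℝ := min 1 (f 0 / (M * y)) with hk
  have hkpos : 0 < k := lt_min one_pos (div_pos hf0 (by positivity))
  have hk1 : k ≤ 1 := min_le_left _ _
  have hkb : M * (k * y) ≤ f 0 := by
    have h2 : k ≤ f 0 / (M * y) := min_le_right _ _
    calc M * (k * y) ≤ M * ((f 0 / (M * y)) * y) := by
          apply mul_le_mul_of_nonneg_left (mul_le_mul_of_nonneg_right h2 hypos.le) hMpos.le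
      _ = f 0 := by field_simp
  -- the auxiliary function
  set g : ℝ → ℝ := fun x => M * Real.log (1 + k * x) with hg
  -- subadditivity of g on nonnegatives
  have gsub : ∀ a b : ℝ, 0 ≤ a → 0 ≤ b → g (a + b) ≤ g a + g b := by
    intro a b ha hb
    have h1 : (0:ℝ) < 1 + k * a := by nlinarith
    have h2 : (0:ℝ) < 1 + k * b := by nlinarith
    have h3 : 1 + k * (a + b) ≤ (1 + k * a) * (1 + k * b) := by nlinarith [mul_nonneg (mul_nonneg (mul_nonneg hkpos.le hkpos.le) ha) hb]
    have := Real.log_le_log (by nlinarith) h3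
    rw [Real.log_mul (ne_of_gt h1) (ne_of_gt h2)] at this
    simp only [hg]
    nlinarith
  have g0 : g 0 = 0 := by simp [hg]
  have gnonneg : ∀ x, 0 ≤ x → 0 ≤ g x := by
    intro x hx
    have : 0 ≤ Real.log (1 + k * x) := Real.log_nonneg (by nlinarith)
    simpa [hg] using mul_nonneg hMpos.le this
  -- g ≤ f on nonnegatives
  have gle : ∀ x, 0 ≤ x → g x ≤ f x := by
    intro x hx
    rcases le_or_gt x y with hxy | hxy
    · -- small x : g x ≤ M k x ≤ M k y ≤ f 0 ≤ f x
      have hlog : Real.log (1 + k * x) ≤ k * x := by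
        have := Real.add_one_le_exp (k * x)
        have h1 : (0:ℝ) < 1 + k * x := by nlinarith
        have := Real.log_le_log h1 (by linarith [Real.add_one_le_exp (k * x)] :
          1 + k * x ≤ Real.exp (k * x))
        simpa [Real.log_exp] using this
      have : g x ≤ M * (k * x) := by
        simpa [hg] using mul_le_mul_of_nonneg_left hlog hMpos.le
      have h2 : M * (k * x) ≤ M * (k * y) := by
        apply mul_le_mul_of_nonneg_left _ hMpos.le
        exact mul_le_mul_of_nonneg_left hxy hkpos.le
      have h3 : f 0 ≤ f x := hmono 0 x le_rfl hx
      linarith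
    · -- large x : g x ≤ M log(2x) ≤ f x
      have hx1 : (1:ℝ) ≤ x := le_trans hy1 hxy.le
      have hlog : Real.log (1 + k * x) ≤ Real.log (2 * x) := by
        apply Real.log_le_log (by nlinarith)
        nlinarith
      have : g x ≤ M * Real.log (2 * x) := by
        simpa [hg] using mul_le_mul_of_nonneg_left hlog hMpos.le
      exact le_trans this (hfy x hxy.le)
  -- g (sum l) ≤ sum of f over l
  have glist : ∀ l : List ℝ, (∀ z ∈ l, 0 < z) → g l.sum ≤ (l.map f).sum := by
    intro l
    induction l with
    | nil => intro _; simp [g0]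
    | cons a t ih =>
      intro hpos
      have ha : 0 < a := hpos a List.mem_cons_self
      have ht : ∀ z ∈ t, 0 < z := fun z hz => hpos z (List.mem_cons_of_mem a hz)
      have htsum : 0 ≤ t.sum := List.sum_nonneg (fun z hz => (ht z hz).le)
      have h1 : g (a + t.sum) ≤ g a + g t.sum := gsub a t.sum ha.le htsum
      have h2 : g t.sum ≤ (t.map f).sum := ih ht
      have h3 : g a ≤ f a := gle a ha.le
      simp only [List.sum_cons, List.map_cons]
      linarith
  -- g x ≤ f̂ x for x > 0
  have hhat : ∀ x : ℝ, 0 < x → g x ≤ subadditiveMinorant f x := by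
    intro x hx
    apply le_csInf
    · exact ⟨f x, [x], by simp [hx]⟩
    · rintro b ⟨l, hl, hsum, hmap⟩
      rw [← hmap, ← hsum]
      exact glist l hl
  -- conclusion
  have hbound : ∀ᶠ x in atTop,
      Real.log x + (M * Real.log k) ≤ subadditiveMinorant f x - m * Real.log x := by
    filter_upwards [eventually_ge_atTop (max 1 (1/k))] with x hx
    have hx1 : (1:ℝ) ≤ x := le_trans (le_max_left _ _) hx
    have hxk : 1/k ≤ x := le_trans (le_max_right _ _) hx
    have hxpos : (0:ℝ) < x := lt_of_lt_of_le one_pos hx1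
    have hkx1 : 1 ≤ k * x := by
      rw [div_le_iff₀ hkpos] at hxk
      linarith [hxk]
    have h1 : Real.log (k * x) ≤ Real.log (1 + k * x) :=
      Real.log_le_log (by linarith) (by linarith)
    have h2 : Real.log (k * x) = Real.log k + Real.log x :=
      Real.log_mul (ne_of_gt hkpos) (ne_of_gt hxpos)
    have h3 : g x ≤ subadditiveMinorant f x := hhat x hxpos
    have h4 : M * (Real.log k + Real.log x) ≤ g x := by
      rw [← h2]
      simpa [hg] using mul_le_mul_of_nonneg_left h1 hMpos.le
    have : M * (Real.log k + Real.log x) ≤ subadditiveMinorant f x := le_trans h4 h3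
    have hM' : M * (Real.log k + Real.log x) = Real.log x + M * Real.log k + m * Real.log x := by
      rw [hM]; ring
    linarith [hM' ▸ this]
  apply tendsto_atTop_mono' atTop hbound
  exact tendsto_atTop_add_const_right atTop _ Real.tendsto_log_atTop
end
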